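/- Let R ⊆ S be a module-finite, zero-dimensional (both R and S zero-dimensional) ring extension with conductor (R:S) = 0 and R local with maximal ideal M. Then R ⊆ S is seminormal if and only if S is reduced, and in that case R is a field and S is isomorphic to a finite product of fields. -/

import Mathlib

/-- A module-finite zero-dimensional extension with zero conductor and `R` local is
seminormal iff `S` is reduced; in that case `R` is a field and `S` a finite product
of fields. -/
theorem seminormal_iff_reduced_zero_conductor
    (R : Type u) (S : Type v) [CommRing R] [CommRing S] [IsLocalRing R] [Algebra R S]
    (hinj : Function.Injective (algebraMap R S))
    [Module.Finite R S]
    (hdimR : ∀ P : Ideal R, P.IsPrime → P.IsMaximal)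
    (hdimS : ∀ Q : Ideal S, Q.IsPrime → Q.IsMaximal)
    (hcond : ∀ r : R, (∀ s : S, algebraMap R S r * s ∈ (algebraMap R S).range) → r = 0) :
    ((∀ b : S, b ^ 2 ∈ (algebraMap R S).range → b ^ 3 ∈ (algebraMap R S).range →
        b ∈ (algebraMap R S).range) ↔ IsReduced S) ∧
      (IsReduced S → IsField R ∧ ∃ (n : ℕ) (K : Fin n → Type v) (_ : ∀ i, Field (K i)),
        Nonempty (S ≃+* ∀ i, K i)) := by
  -- If `S` is reduced, then `R` is a field.
  have hfield : IsReduced S → IsField R := by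
    intro hred
    have hnilR : ∀ x : R, x ∈ IsLocalRing.maximalIdeal R → x = 0 := by
      intro x hx
      have hnil : IsNilpotent x := by
        rw [nilpotent_iff_mem_prime]
        intro P hP
        have : P = IsLocalRing.maximalIdeal R := IsLocalRing.eq_maximalIdeal (hdimR P hP)
        rwa [this]
      have : IsNilpotent (algebraMap R S x) := hnil.map (algebraMap R S)
      have h0 : algebraMap R S x = 0 := this.eq_zero
      have : algebraMap R S x = algebraMap R S 0 := by rw [h0, map_zero]
      exact hinj this
    refine ⟨exists_pair_ne R, mul_comm, ?_⟩
    intro a ha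
    have : IsUnit a := by
      by_contra hu
      exact ha (hnilR a ((IsLocalRing.mem_maximalIdeal a).mpr hu))
    obtain ⟨u, rfl⟩ := this
    exact ⟨(u⁻¹ : Rˣ), u.mul_inv⟩
  -- The seminormality ↔ reduced equivalence.
  have hiff : (∀ b : S, b ^ 2 ∈ (algebraMap R S).range → b ^ 3 ∈ (algebraMap R S).range →
      b ∈ (algebraMap R S).range) ↔ IsReduced S := by
    constructor
    · intro hsn
      -- first: no nonzero square-zero elements
      have hsq : ∀ b : S, b ^ 2 = 0 → b = 0 := by
        intro b hb
        have hb3 : b ^ 3 = 0 := by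
          have : b ^ 3 = b ^ 2 * b := by ring
          rw [this, hb, zero_mul]
        obtain ⟨r, hr⟩ := hsn b ⟨0, by rw [map_zero, hb]⟩ ⟨0, by rw [map_zero, hb3]⟩
        have hr0 : r = 0 := by
          apply hcond
          intro s
          apply hsn
          · refine ⟨0, ?_⟩
            rw [map_zero]
            rw [mul_pow, hr, hb, zero_mul]
          · refine ⟨0, ?_⟩
            rw [map_zero]
            rw [mul_pow, hr, hb3, zero_mul]
        rw [← hr, hr0, map_zero]
      have key : ∀ n : ℕ, ∀ x : S, x ^ n = 0 → x = 0 := by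
        intro n
        induction n using Nat.strong_induction_on with
        | _ n ih =>
          intro x hx
          match n, hx with
          | 0, hx =>
            rw [pow_zero] at hx
            haveI := subsingleton_of_zero_eq_one hx.symm
            exact Subsingleton.elim x 0
          | 1, hx => rwa [pow_one] at hx
          | (n+2), hx =>
            have h2 : (x ^ (n+1)) ^ 2 = 0 := by
              rw [← pow_mul]
              have h : (n+1) * 2 = (n+2) + n := by ring
              rw [h, pow_add, hx, zero_mul]
            exact ih (n+1) (by omega) x (hsq _ h2)
      exact ⟨fun x ⟨n, hn⟩ => key n x hn⟩
    · intro hred b hb2 hb3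
      obtain ⟨r, hr⟩ := hb2
      by_cases hr0 : r = 0
      · have hb : b ^ 2 = 0 := by rw [← hr, hr0, map_zero]
        have : b = 0 := IsNilpotent.eq_zero ⟨2, hb⟩
        exact ⟨0, by rw [map_zero, this]⟩
      · obtain ⟨u, hu⟩ := (hfield hred).mul_inv_cancel hr0
        obtain ⟨t, ht⟩ := hb3
        refine ⟨t * u, ?_⟩
        calc algebraMap R S (t * u) = b ^ 3 * algebraMap R S u := by
              rw [map_mul, ht]
          _ = b * (b ^ 2 * algebraMap R S u) := by ring
          _ = b * (algebraMap R S r * algebraMap R S u) := by rw [hr]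
          _ = b * algebraMap R S (r * u) := by rw [map_mul]
          _ = b := by rw [hu, map_one, mul_one]
  refine ⟨hiff, fun hred => ⟨hfield hred, ?_⟩⟩
  -- `S` is artinian reduced, hence a finite product of fields.
  haveI : IsArtinianRing R := by
    letI := (hfield hred).toField
    infer_instance
  haveI : IsArtinianRing S := IsArtinianRing.of_finite R S
  haveI : Finite {I : Ideal S | I.IsMaximal} := (IsArtinianRing.setOfPred_isMaximal_finite S).to_subtype
  haveI : Fintype {I : Ideal S | I.IsMaximal} := Fintype.ofFinite _
  refine ⟨Fintype.card {I : Ideal S | I.IsMaximal},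
    fun i => S ⧸ ((Fintype.equivFin {I : Ideal S | I.IsMaximal}).symm i).1,
    fun i => @Ideal.Quotient.field S _ _ ((Fintype.equivFin _).symm i).2, ⟨?_⟩⟩
  exact ((IsArtinianRing.equivPi S).toRingEquiv.trans
    (RingEquiv.piCongrLeft (fun I : {I : Ideal S | I.IsMaximal} => S ⧸ I.1)
      ({ toFun := fun I => ⟨I.asIdeal, I.isMaximal⟩, invFun := fun I => ⟨I.1, I.2⟩,
         left_inv := fun _ => rfl, right_inv := fun _ => rfl } :
        MaximalSpectrum S ≃ {I : Ideal S | I.IsMaximal}))).trans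
    (RingEquiv.piCongrLeft (fun I : {I : Ideal S | I.IsMaximal} => S ⧸ I.1)
      (Fintype.equivFin _).symm).symm
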